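/- The notion of supported proof is consistent: for any transition system specification and any closed formula φ, if φ has a supported proof then no formula contradicting φ has a supported proof. -/
import Mathlib


/-!
A Transition System Specification (TSS) over a type `T` of closed terms and a type `L` of
labels.  Since the notions of supported model and supported proof only ever refer to *closed
instances* of the deduction rules (a deduction rule together with a closing substitution
applied to it), we represent a TSS by the set of closed instances of its deduction rules.
-/

/-- Closed formulae: the positive formula `t →[l] t'` and the negative formula `t ↛[l]`. -/
inductive Formula (T L : Type) : Type
  | pos : T → L → T → Formula T L
  | neg : T → L → Formula T L

namespace Formula

/-- `t →[l] t'` and `t ↛[l]` contradict each other (and nothing else). -/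
def contradicts {T L : Type} : Formula T L → Formula T L → Prop
  | pos t l _, neg u m => t = u ∧ l = m
  | neg t l, pos u m _ => t = u ∧ l = m
  | _, _ => False

end Formula

/-- A closed instance of a deduction rule: a set of premises together with a positive
conclusion `src →[lbl] tgt`. -/
structure Rule (T L : Type) where
  prem : Set (Formula T L)
  src : T
  lbl : L
  tgt : T

/-- A transition system specification, given by the set of closed instances of its
deduction rules. -/
structure TSS (T L : Type) where
  rules : Set (Rule T L)

/-- A transition relation (a set of closed positive formulae, represented as triples `(t, l, t')`)
is *consistent* with a set `Ψ` of closed formulae when every positive formula of `Ψ` belongs to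
the relation, and no formula of the relation contradicts a negative formula of `Ψ`. -/
def Consistent {T L : Type} (Tr : Set (T × L × T)) (Ψ : Set (Formula T L)) : Prop :=
  (∀ t l t', Formula.pos t l t' ∈ Ψ → (t, l, t') ∈ Tr) ∧
  (∀ t l, Formula.neg t l ∈ Ψ → ∀ t', (t, l, t') ∉ Tr)

/-- `Tr` is a supported model of the TSS `S` for the set `P` of closed terms and the set `L'`
of labels:
(1) every transition in `Tr` is the conclusion of a closed instance of a deduction rule whose
    premises are consistent with `Tr`, and
(2) whenever a closed instance of a deduction rule has conclusion `p →[l] p'` with `p ∈ P` and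
    `l ∈ L'` and premises consistent with `Tr`, then `(p, l, p') ∈ Tr`. -/
def SupportedModelFor {T L : Type} (S : TSS T L) (P : Set T) (L' : Set L)
    (Tr : Set (T × L × T)) : Prop :=
  (∀ q l q', (q, l, q') ∈ Tr →
      ∃ r ∈ S.rules, r.src = q ∧ r.lbl = l ∧ r.tgt = q' ∧ Consistent Tr r.prem) ∧
  (∀ p ∈ P, ∀ l ∈ L', ∀ p',
      (∃ r ∈ S.rules, r.src = p ∧ r.lbl = l ∧ r.tgt = p' ∧ Consistent Tr r.prem) →
      (p, l, p') ∈ Tr)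

/-- `Tr` is a supported model of the TSS `S` (for all closed terms and all labels). -/
def SupportedModel {T L : Type} (S : TSS T L) (Tr : Set (T × L × T)) : Prop :=
  SupportedModelFor S Set.univ Set.univ Tr

/-- The TSS `S` provides a supported proof of the closed formula `φ`.  This inductive
definition captures precisely the well-founded upwardly branching proof trees: a node labelled
with a positive formula must, together with the set of formulae labelling the nodes above it,
form a closed instance of a deduction rule; a node labelled with a negative formula has a set
`K` of formulae above it such that every closed instance of a deduction rule whose conclusion
contradicts the formula has a premise contradicted by some formula of `K`. -/
inductive SupportedProof {T L : Type} (S : TSS T L) : Formula T L → Prop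
  | pos (r : Rule T L) (hr : r ∈ S.rules)
      (hprem : ∀ ψ ∈ r.prem, SupportedProof S ψ) :
      SupportedProof S (Formula.pos r.src r.lbl r.tgt)
  | neg (t : T) (l : L) (K : Set (Formula T L))
      (hK : ∀ ψ ∈ K, SupportedProof S ψ)
      (hrules : ∀ r ∈ S.rules, r.src = t → r.lbl = l →
          ∃ χ ∈ K, ∃ χ' ∈ r.prem, Formula.contradicts χ χ') :
      SupportedProof S (Formula.neg t l)

/-- A TSS is s-complete when for every closed positive formula, either the formula itself or
the (unique) formula contradicting it has a supported proof. -/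
def SComplete {T L : Type} (S : TSS T L) : Prop :=
  ∀ t l t', SupportedProof S (Formula.pos t l t') ∨ SupportedProof S (Formula.neg t l)


lemma Formula.contradicts_symm {T L : Type} {a b : Formula T L}
    (h : Formula.contradicts a b) : Formula.contradicts b a := by
  cases a <;> cases b <;> simp_all [Formula.contradicts]

lemma supportedProof_consistent_aux {T L : Type} (S : TSS T L) (φ : Formula T L)
    (hφ : SupportedProof S φ) : ∀ ψ, Formula.contradicts ψ φ → ¬ SupportedProof S ψ := by
  induction hφ with
  | pos r hr hprem ih =>
    intro ψ hc hψ
    cases ψ with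
    | pos => exact hc.elim
    | neg t l =>
      obtain ⟨ht, hl⟩ := hc
      cases hψ with
      | neg _ _ K hK hrules =>
        obtain ⟨χ, hχK, χ', hχ', hcc⟩ := hrules r hr ht.symm hl.symm
        exact ih χ' hχ' χ hcc (hK χ hχK)
  | neg t l K hK hr ih =>
    intro ψ hc hψ
    cases ψ with
    | neg => exact hc.elim
    | pos u m u' =>
      obtain ⟨ht, hl⟩ := hc
      cases hψ with
      | pos r hrS hprem =>
        obtain ⟨χ, hχK, χ', hχ', hcc⟩ := hr r hrS ht hl
        exact ih χ hχK χ' (Formula.contradicts_symm hcc) (hprem χ' hχ')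

/-- The notion of supported proof is consistent: if a closed formula `φ` has
a supported proof, then no formula contradicting `φ` has a supported proof. -/
theorem supportedProof_consistent {T L : Type} (S : TSS T L) (φ ψ : Formula T L)
    (hφ : SupportedProof S φ) (hψφ : Formula.contradicts ψ φ) :
    ¬ SupportedProof S ψ := by
  exact supportedProof_consistent_aux S φ hφ ψ hψφ
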